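/- (Pointwise form of Proposition 3.1.) Suppose 𝒳 is precovering and preenveloping and τ𝒳 = 𝒳. Let M and N be objects of 𝖳 and let Σ^{-1}M → W → X^M →p M be a distinguished triangle in which p is an 𝒳-precover. Then there is a k-linear isomorphism 𝖳_𝒳(N, M) ≅ (𝖳_𝒳(W, Σ^{-1}(S N)))^∨, where (−)^∨ = Hom_k(−,k). (Thus the quotient category 𝖳_𝒳 has a Serre functor given on objects by N ↦ σ(Σ^{-1}SN), so the Auslander–Reiten translation of 𝖳_𝒳 is induced by τ.) -/

import Mathlib

/-!
STATEMENT 10 (pointwise form of Proposition 3.1).  Let `k` be an algebraically closed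
field and `T` a `k`-linear triangulated category with finite-dimensional Hom-spaces,
split idempotents and a Serre functor `S`; let `τ = Σ⁻¹ ∘ S` and let `𝒳` be a
precovering and preenveloping class of objects closed under isomorphisms, finite direct
sums and direct summands with `τ𝒳 = 𝒳`.  If `Σ⁻¹M → W → X^M →p M` is a distinguished
triangle (written in rotated form `W → X^M →p M → ΣW`) in which `p` is an `𝒳`-precover,
then there is a `k`-linear isomorphism `T_𝒳(N, M) ≅ (T_𝒳(W, Σ⁻¹(S N)))^∨`.
-/

open CategoryTheory CategoryTheory.Limits CategoryTheory.Pretriangulated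

/-- A morphism factors through (some object of) the class `𝒳`. -/
def FactorsThroughClass {C : Type*} [Category C] (𝒳 : Set C) {A B : C} (f : A ⟶ B) : Prop :=
  ∃ (X : C) (g : A ⟶ X) (h : X ⟶ B), X ∈ 𝒳 ∧ g ≫ h = f

/-- `f : A ⟶ B` is an `𝒳`-monomorphism: every morphism from `A` to an object of `𝒳`
factors through `f`. -/
def XMono {C : Type*} [Category C] (𝒳 : Set C) {A B : C} (f : A ⟶ B) : Prop :=
  ∀ (X : C), X ∈ 𝒳 → ∀ (g : A ⟶ X), ∃ h : B ⟶ X, f ≫ h = g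

/-- `f : A ⟶ B` is an `𝒳`-epimorphism: every morphism from an object of `𝒳` to `B`
factors through `f`. -/
def XEpi {C : Type*} [Category C] (𝒳 : Set C) {A B : C} (f : A ⟶ B) : Prop :=
  ∀ (X : C), X ∈ 𝒳 → ∀ (g : X ⟶ B), ∃ h : X ⟶ A, h ≫ f = g

/-- The `k`-subspace `𝒳(A,B) ⊆ Hom(A,B)` of morphisms factoring through `𝒳` (for `𝒳`
closed under isomorphisms, sums and summands this set is already a subspace, so taking
the span is harmless). -/
def XHom (k : Type*) [Field k] {C : Type*} [Category C] [Preadditive C] [Linear k C]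
    (𝒳 : Set C) (A B : C) : Submodule k (A ⟶ B) :=
  Submodule.span k {f : A ⟶ B | FactorsThroughClass 𝒳 f}

/-- The data of a Serre functor `S` on a `k`-linear category: a `k`-linear autoequivalence
together with isomorphisms `Hom(A,B) ≅ Hom(B, S A)^∨`, natural in `A` and `B`. -/
structure SerreFunctorData (k : Type*) [Field k] (C : Type*) [Category C]
    [Preadditive C] [Linear k C] where
  S : C ⥤ C
  additive : S.Additive
  linear : S.Linear k
  isEquivalence : S.IsEquivalence
  pairing : ∀ A B : C, (A ⟶ B) ≃ₗ[k] Module.Dual k (B ⟶ S.obj A)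
  natB : ∀ {A B B' : C} (f : A ⟶ B) (g : B ⟶ B') (h : B' ⟶ S.obj A),
    pairing A B' (f ≫ g) h = pairing A B f (g ≫ h)
  natA : ∀ {A A' B : C} (e : A' ⟶ A) (f : A ⟶ B) (h : B ⟶ S.obj A'),
    pairing A' B (e ≫ f) h = pairing A B f (h ≫ S.map e)

section CruxSection
open Module Polynomial

universe uV uW

lemma crux_aux (k : Type*) [Field k] [IsAlgClosed k] :
    ∀ (n : ℕ) (V : Type uV) (W : Type uW) [AddCommGroup V] [AddCommGroup W]
      [Module k V] [Module k W] [FiniteDimensional k V] [FiniteDimensional k W]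
      (f : V ≃+ W) (π : k →+* Module.End k W),
      (∀ (c : k) (x : V), f (c • x) = π c (f x)) →
      finrank k W = n → finrank k V = finrank k W := by
  intro n
  induction n using Nat.strong_induction_on with
  | _ n IH =>
    intro V W _ _ _ _ _ _ f π hc hn
    by_cases hW : Subsingleton W
    · have hV : Subsingleton V := f.toEquiv.subsingleton
      rw [finrank_zero_of_subsingleton, finrank_zero_of_subsingleton]
    have hWnt : Nontrivial W := not_subsingleton_iff_nontrivial.mp hW
    obtain ⟨w₀, hw₀⟩ := exists_ne (0 : W)
    by_cases hscal : ∀ c : k, ∃ μ : k, π c = μ • (1 : Module.End k W)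
    · -- scalar case: `f` is semilinear along a ring endomorphism σ of k
      set x₀ : V := f.symm w₀ with hx₀def
      have hfx₀ : f x₀ = w₀ := f.apply_symm_apply w₀
      have hx₀ : x₀ ≠ 0 := by
        intro h; apply hw₀; rw [← hfx₀, h, map_zero]
      choose σ hσ using hscal
      have hsc : ∀ (c : k) (x : V), f (c • x) = σ c • f x := by
        intro c x; rw [hc, hσ]; simp
      have hscs : ∀ (c : k) (y : W), f.symm (σ c • y) = c • f.symm y := by
        intro c y
        apply f.injective
        rw [f.apply_symm_apply, hsc, f.apply_symm_apply]
      have huniq : ∀ (μ ν : k), μ • w₀ = ν • w₀ → μ = ν := fun μ ν h =>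
        smul_left_injective k hw₀ h
      have hσ1 : σ 1 = 1 := by
        apply huniq; rw [← hfx₀, ← hsc, one_smul, one_smul]
      have hσ0 : σ 0 = 0 := by
        apply huniq; rw [← hfx₀, ← hsc, zero_smul, zero_smul, map_zero]
      have hσadd : ∀ c d, σ (c + d) = σ c + σ d := by
        intro c d; apply huniq
        rw [← hfx₀, ← hsc, add_smul, add_smul, map_add, hsc, hsc]
      have hσmul : ∀ c d, σ (c * d) = σ c * σ d := by
        intro c d; apply huniq
        rw [← hfx₀, ← hsc, mul_smul, mul_smul, hsc, hsc]
      set σR : k →+* k := { toFun := σ, map_one' := hσ1, map_mul' := fun c d => hσmul c d,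
                            map_zero' := hσ0, map_add' := fun c d => hσadd c d } with hσRdef
      have hσinj : Function.Injective σ := σR.injective
      have hVnt : Nontrivial V := f.toEquiv.nontrivial
      -- σ is surjective via the characteristic polynomial argument
      have hσsurj : Function.Surjective σ := by
        intro d
        set h : V →ₗ[k] V :=
          { toFun := fun x => f.symm (d • f x)
            map_add' := by intro x y; rw [map_add, smul_add, map_add]
            map_smul' := by
              intro c x
              simp only [RingHom.id_apply]
              rw [hsc, smul_comm, hscs] } with hhdef
        have happ : ∀ x : V, h x = f.symm (d • f x) := fun _ => rfl
        have hpow : ∀ (i : ℕ) (x : V), (h ^ i) x = f.symm (d ^ i • f x) := by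
          intro i
          induction i with
          | zero => intro x; simp
          | succ i ih =>
            intro x
            rw [pow_succ', Module.End.mul_apply, happ, ih, f.apply_symm_apply,
              ← mul_smul, ← pow_succ']
        have key : ∀ (q : k[X]) (x : V),
            (Polynomial.aeval h q) x = f.symm ((q.map σR).eval d • f x) := by
          intro q
          induction q using Polynomial.induction_on' with
          | add p q hp hq =>
            intro x
            rw [map_add (aeval h), Polynomial.map_add, LinearMap.add_apply, hp x, hq x,
              eval_add, add_smul, map_add]
          | monomial i a =>
            intro x
            rw [Polynomial.aeval_monomial, Polynomial.map_monomial, Module.End.mul_apply,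
              hpow, eval_monomial]
            have : (algebraMap k (Module.End k V) a) = a • (1 : Module.End k V) := by
              ext y; simp [Algebra.algebraMap_eq_smul_one]
            rw [this]
            simp only [LinearMap.smul_apply, Module.End.one_apply]
            rw [← hscs, ← mul_smul]
            rfl
        have hchar := LinearMap.aeval_self_charpoly h
        have h0 : ((h.charpoly.map σR).eval d) • w₀ = 0 := by
          have hk := key h.charpoly x₀
          rw [hchar] at hk
          simp only [LinearMap.zero_apply] at hk
          rw [hfx₀] at hk
          have h2 := congrArg f hk
          rwa [map_zero, f.apply_symm_apply, eq_comm] at h2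
        have hev : (h.charpoly.map σR).eval d = 0 := by
          rcases smul_eq_zero.mp h0 with h | h
          · exact h
          · exact absurd h hw₀
        have hmon : (h.charpoly.map σR).Monic := h.charpoly_monic.map σR
        have hd : d ∈ (h.charpoly.map σR).roots :=
          mem_roots'.mpr ⟨hmon.ne_zero, hev⟩
        rw [(IsAlgClosed.splits h.charpoly).roots_map_of_injective σR.injective] at hd
        obtain ⟨r, _, hr⟩ := Multiset.mem_map.mp hd
        exact ⟨r, hr⟩
      have hrank := lift_rank_eq_of_equiv_equiv (R := k) (R' := k) (M := V) (M' := W)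
        (ZeroHom.mk σ hσ0) f ⟨hσinj, hσsurj⟩ (fun r m => hsc r m)
      unfold Module.finrank
      rw [← Cardinal.toNat_lift.{uW} (Module.rank k V), ← Cardinal.toNat_lift.{uV} (Module.rank k W), hrank]
    · -- non-scalar case: split off an eigenspace
      push_neg at hscal
      obtain ⟨c₀, hc₀⟩ := hscal
      obtain ⟨μ₀, hμ₀⟩ := Module.End.exists_eigenvalue (π c₀)
      set E : Submodule k W := Module.End.eigenspace (π c₀) μ₀ with hEdef
      have hEbot : E ≠ ⊥ := hμ₀
      have hmemE : ∀ x : W, x ∈ E ↔ (π c₀) x = μ₀ • x := by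
        intro x; exact Module.End.mem_eigenspace_iff
      have hEtop : E ≠ ⊤ := by
        intro htop
        apply hc₀ μ₀
        ext x
        have : x ∈ E := htop ▸ Submodule.mem_top
        rw [hmemE] at this
        simpa using this
      have hstab : ∀ (c : k), ∀ x ∈ E, (π c) x ∈ E := by
        intro c x hx
        rw [hmemE] at hx ⊢
        calc (π c₀) ((π c) x) = (π c₀ * π c) x := rfl
        _ = (π c * π c₀) x := by rw [← map_mul, ← map_mul, mul_comm]
        _ = (π c) (μ₀ • x) := by rw [Module.End.mul_apply, hx]
        _ = μ₀ • (π c) x := map_smul _ _ _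
      -- preimage submodule
      set VE : Submodule k V :=
        { carrier := {x | f x ∈ E}
          add_mem' := by intro x y hx hy; simp only [Set.mem_setOf_eq, map_add];
                          exact E.add_mem hx hy
          zero_mem' := by simp only [Set.mem_setOf_eq, map_zero]; exact E.zero_mem
          smul_mem' := by intro c x hx; simp only [Set.mem_setOf_eq, hc];
                           exact hstab c _ hx } with hVEdef
      have hVEmem : ∀ x : V, x ∈ VE ↔ f x ∈ E := fun x => Iff.rfl
      -- restricted equivalence
      set fE : VE ≃+ E :=
        { toFun := fun x => ⟨f x.1, x.2⟩
          invFun := fun y => ⟨f.symm y.1, by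
            rw [hVEmem, f.apply_symm_apply]; exact y.2⟩
          left_inv := by intro x; apply Subtype.ext; exact f.symm_apply_apply x.1
          right_inv := by intro y; apply Subtype.ext; exact f.apply_symm_apply y.1
          map_add' := by intro x y; apply Subtype.ext; exact map_add f x.1 y.1 } with hfEdef
      set πE : k →+* Module.End k E :=
        { toFun := fun c => (π c).restrict (hstab c)
          map_one' := by
            apply LinearMap.ext; intro x; apply Subtype.ext
            show (π 1) x.1 = x.1
            rw [map_one]; rfl
          map_mul' := by
            intro c d
            apply LinearMap.ext; intro x; apply Subtype.ext
            show (π (c * d)) x.1 = (π c) ((π d) x.1)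
            rw [map_mul]; rfl
          map_zero' := by
            apply LinearMap.ext; intro x; apply Subtype.ext
            show (π 0) x.1 = 0
            rw [map_zero]; rfl
          map_add' := by
            intro c d
            apply LinearMap.ext; intro x; apply Subtype.ext
            show (π (c + d)) x.1 = (π c) x.1 + (π d) x.1
            rw [map_add]; rfl } with hπEdef
      have hcE : ∀ (c : k) (x : VE), fE (c • x) = πE c (fE x) := by
        intro c x
        ext
        show f (c • x.1) = _
        rw [hc]
        rfl
      -- quotient equivalence
      have hrel0 : ∀ x y : V, VE.quotientRel x y → E.quotientRel (f x) (f y) := by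
        intro x y hxy
        rw [Submodule.quotientRel_def] at hxy ⊢
        rw [← map_sub]
        exact hxy
      have hrel1 : ∀ x y : W, E.quotientRel x y → VE.quotientRel (f.symm x) (f.symm y) := by
        intro x y hxy
        rw [Submodule.quotientRel_def] at hxy ⊢
        rw [hVEmem, map_sub, f.apply_symm_apply, f.apply_symm_apply]
        exact hxy
      set g0 : (V ⧸ VE) → (W ⧸ E) := Quotient.map' f hrel0 with hg0def
      set g1 : (W ⧸ E) → (V ⧸ VE) := Quotient.map' f.symm hrel1 with hg1def
      have hg0mk : ∀ x : V, g0 (Submodule.Quotient.mk x) = Submodule.Quotient.mk (f x) :=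
        fun x => Quotient.map'_mk'' _ _ x
      have hg1mk : ∀ y : W, g1 (Submodule.Quotient.mk y) = Submodule.Quotient.mk (f.symm y) :=
        fun y => Quotient.map'_mk'' _ _ y
      have hmkV : ∀ x : V, (Quotient.mk'' x : V ⧸ VE) = Submodule.Quotient.mk x := fun _ => rfl
      have hmkW : ∀ y : W, (Quotient.mk'' y : W ⧸ E) = Submodule.Quotient.mk y := fun _ => rfl
      set g : (V ⧸ VE) ≃+ (W ⧸ E) :=
        { toFun := g0
          invFun := g1
          left_inv := by
            intro x
            induction x using Quotient.inductionOn' with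
            | h x => rw [hmkV, hg0mk, hg1mk, f.symm_apply_apply]
          right_inv := by
            intro y
            induction y using Quotient.inductionOn' with
            | h y => rw [hmkW, hg1mk, hg0mk, f.apply_symm_apply]
          map_add' := by
            intro x y
            induction x using Quotient.inductionOn' with
            | h x =>
              induction y using Quotient.inductionOn' with
              | h y =>
                show g0 (Submodule.Quotient.mk x + Submodule.Quotient.mk y) =
                  g0 (Submodule.Quotient.mk x) + g0 (Submodule.Quotient.mk y)
                rw [← Submodule.Quotient.mk_add, hg0mk, hg0mk, hg0mk,
                  map_add, Submodule.Quotient.mk_add] } with hgdef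
      set πQ : k →+* Module.End k (W ⧸ E) :=
        { toFun := fun c => Submodule.mapQ E E (π c) (fun x hx => hstab c x hx)
          map_one' := by
            refine Submodule.linearMap_qext _ ?_
            apply LinearMap.ext; intro x
            simp [Submodule.mapQ_apply]
          map_mul' := by
            intro c d
            refine Submodule.linearMap_qext _ ?_
            apply LinearMap.ext; intro x
            simp [Submodule.mapQ_apply, map_mul]
          map_zero' := by
            refine Submodule.linearMap_qext _ ?_
            apply LinearMap.ext; intro x
            simp [Submodule.mapQ_apply]
          map_add' := by
            intro c d
            refine Submodule.linearMap_qext _ ?_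
            apply LinearMap.ext; intro x
            simp [Submodule.mapQ_apply, map_add] } with hπQdef
      have gmk : ∀ x : V, g (Submodule.Quotient.mk x) = Submodule.Quotient.mk (f x) :=
        fun x => hg0mk x
      have hcQ : ∀ (c : k) (x : V ⧸ VE), g (c • x) = πQ c (g x) := by
        intro c x
        induction x using Quotient.inductionOn' with
        | h x =>
          rw [show (Quotient.mk'' x : V ⧸ VE) = Submodule.Quotient.mk x from rfl]
          rw [← Submodule.Quotient.mk_smul, gmk, gmk]
          show Submodule.Quotient.mk (f (c • x)) =
            Submodule.mapQ E E (π c) (fun x hx => hstab c x hx) (Submodule.Quotient.mk (f x))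
          rw [Submodule.mapQ_apply, hc]
      -- dimensions
      have hEfin : finrank k E < n := by
        rw [← hn]
        exact Submodule.finrank_lt hEtop
      have hEpos : 0 < finrank k E := by
        rcases Nat.eq_zero_or_pos (finrank k E) with h | h
        · exact absurd (Submodule.finrank_eq_zero.mp h) hEbot
        · exact h
      have hsum := Submodule.finrank_quotient_add_finrank E
      have hQfin : finrank k (W ⧸ E) < n := by omega
      have e1 := IH (finrank k E) hEfin VE E fE πE hcE rfl
      have e2 := IH (finrank k (W ⧸ E)) hQfin (V ⧸ VE) (W ⧸ E) g πQ hcQ rfl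
      have hsumV := Submodule.finrank_quotient_add_finrank VE
      omega

end CruxSection

open Module

section Aux

open Module

/-- The "flip" of the Serre pairing: `Hom(B, S A)` is the dual of `Hom(A, B)`. -/
noncomputable def serreFlip {k : Type*} [Field k] {C : Type*} [Category C] [Preadditive C]
    [Linear k C] [∀ A B : C, FiniteDimensional k (A ⟶ B)]
    (SD : SerreFunctorData k C) (A B : C) :
    (B ⟶ SD.S.obj A) ≃ₗ[k] Module.Dual k (A ⟶ B) := by
  refine LinearEquiv.ofBijective ((SD.pairing A B).toLinearMap.flip) ⟨?_, ?_⟩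
  · -- injective
    rw [← LinearMap.ker_eq_bot, LinearMap.ker_eq_bot']
    intro t ht
    rw [← Module.forall_dual_apply_eq_zero_iff k t]
    intro φ
    have h1 : SD.pairing A B ((SD.pairing A B).symm φ) = φ := (SD.pairing A B).apply_symm_apply φ
    have h2 := congrArg (fun (ψ : Module.Dual k (A ⟶ B)) => ψ ((SD.pairing A B).symm φ)) ht
    simpa [h1] using (by
      have := congrArg (fun (ψ : (A ⟶ B) →ₗ[k] k) => ψ ((SD.pairing A B).symm φ)) ht
      simpa using this)
  · -- surjective
    have hfr : finrank k (B ⟶ SD.S.obj A) = finrank k (Module.Dual k (A ⟶ B)) := by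
      rw [Subspace.dual_finrank_eq]
      have := LinearEquiv.finrank_eq (SD.pairing A B)
      rw [this, Subspace.dual_finrank_eq]
    exact (LinearMap.injective_iff_surjective_of_finrank_eq_finrank hfr).mp (by
      rw [← LinearMap.ker_eq_bot, LinearMap.ker_eq_bot']
      intro t ht
      rw [← Module.forall_dual_apply_eq_zero_iff k t]
      intro φ
      have := congrArg (fun (ψ : (A ⟶ B) →ₗ[k] k) => ψ ((SD.pairing A B).symm φ)) ht
      simpa [(SD.pairing A B).apply_symm_apply] using this)

@[simp] lemma serreFlip_apply {k : Type*} [Field k] {C : Type*} [Category C] [Preadditive C]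
    [Linear k C] [∀ A B : C, FiniteDimensional k (A ⟶ B)]
    (SD : SerreFunctorData k C) (A B : C) (t : B ⟶ SD.S.obj A) (x : A ⟶ B) :
    serreFlip SD A B t x = SD.pairing A B x t := rfl

end Aux
theorem serre_duality_in_quotient_category
    (k : Type*) [Field k] [IsAlgClosed k]
    {C : Type*} [Category C] [Preadditive C] [Linear k C] [HasZeroObject C]
    [HasShift C ℤ] [∀ n : ℤ, (CategoryTheory.shiftFunctor C n).Additive]
    [Pretriangulated C] [HasBinaryBiproducts C]
    [∀ A B : C, FiniteDimensional k (A ⟶ B)] [IsIdempotentComplete C]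
    (SD : SerreFunctorData k C)
    (𝒳 : Set C)
    (hiso : ∀ {A B : C}, (A ≅ B) → A ∈ 𝒳 → B ∈ 𝒳)
    (hsum : ∀ {A B : C}, A ∈ 𝒳 → B ∈ 𝒳 → (A ⊞ B) ∈ 𝒳)
    (hsummand : ∀ {A B : C} (i : A ⟶ B) (r : B ⟶ A), i ≫ r = 𝟙 A → B ∈ 𝒳 → A ∈ 𝒳)
    -- `𝒳` is precovering and preenveloping:
    (hprecov : ∀ M : C, ∃ (X : C) (p : X ⟶ M), X ∈ 𝒳 ∧ XEpi 𝒳 p)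
    (hpreenv : ∀ M : C, ∃ (X : C) (e : M ⟶ X), X ∈ 𝒳 ∧ XMono 𝒳 e)
    -- `τ𝒳 = 𝒳`, where `τ = Σ⁻¹ ∘ S`:
    (hτ : ∀ X : C, X ∈ 𝒳 ↔ ((SD.S.obj X)⟦(-1 : ℤ)⟧) ∈ 𝒳)
    (M N W XM : C) (a : W ⟶ XM) (p : XM ⟶ M) (δ : M ⟶ W⟦(1 : ℤ)⟧)
    (hT : Triangle.mk a p δ ∈ distTriang C)
    (hXM : XM ∈ 𝒳) (hp : XEpi 𝒳 p) :
    Nonempty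
      (((N ⟶ M) ⧸ XHom k 𝒳 N M) ≃ₗ[k]
        Module.Dual k
          ((W ⟶ (SD.S.obj N)⟦(-1 : ℤ)⟧) ⧸ XHom k 𝒳 W ((SD.S.obj N)⟦(-1 : ℤ)⟧))) := by
  classical
  letI := SD.isEquivalence
  -- basic notation
  let SN : C := SD.S.obj N
  let tN : C := SN⟦(-1 : ℤ)⟧
  let sW : C := W⟦(1 : ℤ)⟧
  let niso : shiftFunctor C (1:ℤ) ⋙ shiftFunctor C (-1:ℤ) ≅ 𝟭 C :=
    shiftFunctorCompIsoId C (1:ℤ) (-1:ℤ) (by omega)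
  let niso' : shiftFunctor C (-1:ℤ) ⋙ shiftFunctor C (1:ℤ) ≅ 𝟭 C :=
    shiftFunctorCompIsoId C (-1:ℤ) (1:ℤ) (by omega)
  let w : (M⟦(-1:ℤ)⟧ : C) ⟶ W := δ⟦(-1:ℤ)⟧' ≫ niso.hom.app W
  have hpδ : p ≫ δ = 0 := comp_distTriang_mor_zero₂₃ _ hT
  -- Step L : `w` kills maps to 𝒳
  have lemL : ∀ (Y : C) (u : W ⟶ Y), Y ∈ 𝒳 → w ≫ u = 0 := by
    intro Y u hY
    -- the object Y'' with τ(Y'') ≅ Y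
    let Y'' : C := SD.S.asEquivalence.inverse.obj (Y⟦(1:ℤ)⟧)
    have hSY'' : SD.S.obj Y'' ≅ Y⟦(1:ℤ)⟧ := SD.S.asEquivalence.counitIso.app (Y⟦(1:ℤ)⟧)
    have hιY : ((SD.S.obj Y'')⟦(-1:ℤ)⟧ : C) ≅ Y :=
      (shiftFunctor C (-1:ℤ)).mapIso hSY'' ≪≫ niso.app Y
    have hY'' : Y'' ∈ 𝒳 := (hτ Y'').mpr (hiso hιY.symm hY)
    let u' : W ⟶ ((SD.S.obj Y'')⟦(-1:ℤ)⟧ : C) := u ≫ hιY.inv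
    let ζ : M ⟶ SD.S.obj Y'' := δ ≫ u'⟦(1:ℤ)⟧' ≫ niso'.hom.app (SD.S.obj Y'')
    have hq : ∀ q : Y'' ⟶ M, q ≫ ζ = 0 := by
      intro q
      obtain ⟨q', hq'⟩ := hp Y'' hY'' q
      show q ≫ δ ≫ u'⟦(1:ℤ)⟧' ≫ niso'.hom.app (SD.S.obj Y'') = 0
      rw [← hq']
      simp only [Category.assoc, reassoc_of% hpδ, Limits.zero_comp, Limits.comp_zero]
    have hζ : ζ = 0 := by
      rw [← Module.forall_dual_apply_eq_zero_iff k ζ]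
      intro φ
      obtain ⟨q, rfl⟩ : ∃ q, SD.pairing Y'' M q = φ :=
        ⟨(SD.pairing Y'' M).symm φ, (SD.pairing Y'' M).apply_symm_apply φ⟩
      have h1 : SD.pairing Y'' M q ζ = SD.pairing Y'' Y'' (𝟙 Y'') (q ≫ ζ) := by
        have := SD.natB (𝟙 Y'') q ζ
        rw [Category.id_comp] at this
        exact this
      rw [h1, hq q, map_zero]
    have hδu' : δ ≫ u'⟦(1:ℤ)⟧' = 0 := by
      have h2 : δ ≫ u'⟦(1:ℤ)⟧' = (δ ≫ u'⟦(1:ℤ)⟧' ≫ niso'.hom.app (SD.S.obj Y'')) ≫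
          niso'.inv.app (SD.S.obj Y'') := by
        simp
      rw [h2]
      show ζ ≫ _ = 0
      rw [hζ, zero_comp]
    have hwu' : w ≫ u' = 0 := by
      show (δ⟦(-1:ℤ)⟧' ≫ niso.hom.app W) ≫ u' = 0
      have hnat : niso.hom.app W ≫ u' = (u'⟦(1:ℤ)⟧')⟦(-1:ℤ)⟧' ≫
          niso.hom.app ((SD.S.obj Y'')⟦(-1:ℤ)⟧) := (niso.hom.naturality u').symm
      rw [Category.assoc, hnat, ← Category.assoc, ← Functor.map_comp, hδu']
      simp
    have hu : u = u' ≫ hιY.hom := by simp [u']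
    rw [hu, ← Category.assoc, hwu', zero_comp]
  -- Step A : XHom N M = ker Φ
  let Φ : (N ⟶ M) →ₗ[k] (N ⟶ sW) := Linear.rightComp k N δ
  have stepA : XHom k 𝒳 N M = LinearMap.ker Φ := by
    apply le_antisymm
    · rw [XHom, Submodule.span_le]
      rintro f ⟨X, g, h, hX, rfl⟩
      obtain ⟨h', hh'⟩ := hp X hX h
      show (g ≫ h) ≫ δ = 0
      rw [← hh', Category.assoc, Category.assoc, hpδ]
      simp
    · intro f hf
      have hf0 : f ≫ δ = 0 := hf
      obtain ⟨g, hg⟩ := Triangle.coyoneda_exact₃ _ hT f hf0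
      apply Submodule.subset_span
      exact ⟨XM, g, p, hXM, hg.symm⟩
  -- Step C : XHom W tN = ker Ψ
  let Ψ : (W ⟶ tN) →ₗ[k] ((M⟦(-1:ℤ)⟧ : C) ⟶ tN) := Linear.leftComp k tN w
  have stepC : XHom k 𝒳 W tN = LinearMap.ker Ψ := by
    apply le_antisymm
    · rw [XHom, Submodule.span_le]
      rintro g ⟨Y, u, x, hY, rfl⟩
      show w ≫ (u ≫ x) = 0
      rw [← Category.assoc, lemL Y u hY, zero_comp]
    · intro g hg
      have hg0 : w ≫ g = 0 := hg
      -- use the inverse rotation of the triangle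
      have hT' := inv_rot_of_distTriang _ hT
      have hmor : (Triangle.mk a p δ).invRotate.mor₁ = -w := by
        show -(δ⟦(-1:ℤ)⟧' ≫ (shiftEquiv C (1:ℤ)).unitIso.inv.app W) = -w
        rfl
      obtain ⟨h, hh⟩ := Triangle.yoneda_exact₂ _ hT' g (by
        rw [hmor]
        show (-w) ≫ g = 0
        rw [Preadditive.neg_comp, hg0, neg_zero])
      apply Submodule.subset_span
      refine ⟨XM, a, h, hXM, ?_⟩
      exact hh.symm
  -- quotient identifications
  let e₁ : ((N ⟶ M) ⧸ XHom k 𝒳 N M) ≃ₗ[k] LinearMap.range Φ :=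
    (Submodule.quotEquivOfEq _ _ stepA).trans Φ.quotKerEquivRange
  let e₂ : ((W ⟶ tN) ⧸ XHom k 𝒳 W tN) ≃ₗ[k] LinearMap.range Ψ :=
    (Submodule.quotEquivOfEq _ _ stepC).trans Ψ.quotKerEquivRange
  -- Step D1 : rank Φ = rank Φ', via Serre duality
  let Φ' : (sW ⟶ SN) →ₗ[k] (M ⟶ SN) := Linear.leftComp k SN δ
  have stepD1 : finrank k (LinearMap.range Φ) = finrank k (LinearMap.range Φ') := by
    have hcomm : Φ.dualMap.comp (serreFlip SD N sW).toLinearMap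
        = (serreFlip SD N M).toLinearMap.comp Φ' := by
      apply LinearMap.ext
      intro t
      apply LinearMap.ext
      intro f
      show serreFlip SD N sW t (Φ f) = serreFlip SD N M (Φ' t) f
      show SD.pairing N sW (f ≫ δ) t = SD.pairing N M f (δ ≫ t)
      exact SD.natB f δ t
    have h1 : LinearMap.range (Φ.dualMap.comp (serreFlip SD N sW).toLinearMap)
        = LinearMap.range Φ.dualMap := by
      rw [LinearMap.range_comp, LinearEquiv.range, Submodule.map_top]
    calc finrank k (LinearMap.range Φ)
        = finrank k (LinearMap.range Φ.dualMap) :=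
          (LinearMap.finrank_range_dualMap_eq_finrank_range Φ).symm
      _ = finrank k (LinearMap.range (Φ.dualMap.comp (serreFlip SD N sW).toLinearMap)) := by
          rw [h1]
      _ = finrank k (LinearMap.range ((serreFlip SD N M).toLinearMap.comp Φ')) := by
          rw [hcomm]
      _ = finrank k (LinearMap.range Φ') := by
          rw [LinearMap.range_comp]
          exact LinearEquiv.finrank_map_eq (serreFlip SD N M) (LinearMap.range Φ')
  -- Step D2+D3 : rank Φ' = rank Ψ via the additive shift equivalence
  have stepD23 : finrank k (LinearMap.range Φ') = finrank k (LinearMap.range Ψ) := by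
    -- the additive (not a priori linear) bijection given by the shift functor
    let v : (M ⟶ SN) → ((M⟦(-1:ℤ)⟧ : C) ⟶ tN) := fun s => s⟦(-1:ℤ)⟧'
    have hvinj : Function.Injective v := fun s t h => (shiftFunctor C (-1:ℤ)).map_injective h
    let uu : (sW ⟶ SN) → (W ⟶ tN) := fun t => niso.inv.app W ≫ t⟦(-1:ℤ)⟧'
    have husurj : Function.Surjective uu := by
      intro g
      refine ⟨(shiftFunctor C (-1:ℤ)).preimage (niso.hom.app W ≫ g), ?_⟩
      show niso.inv.app W ≫ (shiftFunctor C (-1:ℤ)).map _ = g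
      rw [Functor.map_preimage]
      rw [← Category.assoc, Iso.inv_hom_id_app, Category.id_comp]
    have hsquare : ∀ t : sW ⟶ SN, Ψ (uu t) = v (Φ' t) := by
      intro t
      show w ≫ (niso.inv.app W ≫ t⟦(-1:ℤ)⟧') = (δ ≫ t)⟦(-1:ℤ)⟧'
      show (δ⟦(-1:ℤ)⟧' ≫ niso.hom.app W) ≫ (niso.inv.app W ≫ t⟦(-1:ℤ)⟧') = (δ ≫ t)⟦(-1:ℤ)⟧'
      simp only [Category.assoc, Iso.hom_inv_id_app_assoc]
      rw [← Functor.map_comp]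
    have hrange : ∀ y, y ∈ LinearMap.range Ψ ↔ ∃ s ∈ LinearMap.range Φ', v s = y := by
      intro y
      constructor
      · rintro ⟨g, rfl⟩
        obtain ⟨t, rfl⟩ := husurj g
        exact ⟨Φ' t, ⟨t, rfl⟩, (hsquare t).symm⟩
      · rintro ⟨s, ⟨t, rfl⟩, rfl⟩
        exact ⟨uu t, hsquare t⟩
    -- the twisting of scalars
    let ρ : k → (tN ⟶ tN) := fun c => (c • 𝟙 SN)⟦(-1:ℤ)⟧'
    have hρmul : ∀ c d : k, ρ c ≫ ρ d = ρ (c * d) := by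
      intro c d
      show _ ≫ _ = _
      rw [← Functor.map_comp]
      congr 1
      rw [Linear.smul_comp, Linear.comp_smul, smul_smul, Category.id_comp]
    have hρ1 : ρ 1 = 𝟙 tN := by
      show (1 • 𝟙 SN)⟦(-1:ℤ)⟧' = _
      rw [one_smul]
      exact (shiftFunctor C (-1:ℤ)).map_id SN
    have hρ0 : ρ 0 = 0 := by
      show ((0:k) • 𝟙 SN)⟦(-1:ℤ)⟧' = 0
      rw [zero_smul, Functor.map_zero]
    have hρadd : ∀ c d : k, ρ (c + d) = ρ c + ρ d := by
      intro c d
      show ((c + d) • 𝟙 SN)⟦(-1:ℤ)⟧' = _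
      rw [add_smul, Functor.map_add]
    have hvsmul : ∀ (c : k) (s : M ⟶ SN), v (c • s) = v s ≫ ρ c := by
      intro c s
      show (c • s)⟦(-1:ℤ)⟧' = s⟦(-1:ℤ)⟧' ≫ (c • 𝟙 SN)⟦(-1:ℤ)⟧'
      rw [← Functor.map_comp, Linear.comp_smul, Category.comp_id]
    have hstabΨ : ∀ (c : k), ∀ y ∈ LinearMap.range Ψ,
        (Linear.rightComp k (M⟦(-1:ℤ)⟧ : C) (ρ c)) y ∈ LinearMap.range Ψ := by
      rintro c y ⟨g, rfl⟩
      refine ⟨g ≫ ρ c, ?_⟩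
      show w ≫ (g ≫ ρ c) = (w ≫ g) ≫ ρ c
      simp only [Category.assoc]
    let π : k →+* Module.End k (LinearMap.range Ψ) :=
      { toFun := fun c => (Linear.rightComp k (M⟦(-1:ℤ)⟧ : C) (ρ c)).restrict (hstabΨ c)
        map_one' := by
          apply LinearMap.ext; intro x; apply Subtype.ext
          show x.1 ≫ ρ 1 = x.1
          rw [hρ1, Category.comp_id]
        map_mul' := by
          intro c d
          apply LinearMap.ext; intro x; apply Subtype.ext
          show x.1 ≫ ρ (c * d) = (x.1 ≫ ρ d) ≫ ρ c
          rw [Category.assoc, hρmul, mul_comm d c]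
        map_zero' := by
          apply LinearMap.ext; intro x; apply Subtype.ext
          show x.1 ≫ ρ 0 = 0
          rw [hρ0, Limits.comp_zero]
        map_add' := by
          intro c d
          apply LinearMap.ext; intro x; apply Subtype.ext
          show x.1 ≫ ρ (c + d) = x.1 ≫ ρ c + x.1 ≫ ρ d
          rw [hρadd, Preadditive.comp_add] }
    let F : (LinearMap.range Φ') →+ (LinearMap.range Ψ) :=
      { toFun := fun s => ⟨v s.1, (hrange _).mpr ⟨s.1, s.2, rfl⟩⟩
        map_zero' := by
          apply Subtype.ext
          show v 0 = 0
          exact Functor.map_zero _ _ _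
        map_add' := by
          intro x y
          apply Subtype.ext
          show v (x.1 + y.1) = v x.1 + v y.1
          exact Functor.map_add _ }
    have hFbij : Function.Bijective F := by
      constructor
      · intro x y h
        apply Subtype.ext
        exact hvinj (congrArg Subtype.val h)
      · intro y
        obtain ⟨s, hs, hvs⟩ := (hrange y.1).mp y.2
        exact ⟨⟨s, hs⟩, Subtype.ext hvs⟩
    let Feq : (LinearMap.range Φ') ≃+ (LinearMap.range Ψ) := AddEquiv.ofBijective F hFbij
    have hcompat : ∀ (c : k) (x : LinearMap.range Φ'), Feq (c • x) = π c (Feq x) := by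
      intro c x
      apply Subtype.ext
      show v (c • x.1) = (Feq x).1 ≫ ρ c
      rw [hvsmul]
      rfl
    exact crux_aux k (finrank k (LinearMap.range Ψ)) _ _ Feq π hcompat rfl
  -- assemble
  have hfin : finrank k ((N ⟶ M) ⧸ XHom k 𝒳 N M)
      = finrank k (Module.Dual k ((W ⟶ tN) ⧸ XHom k 𝒳 W tN)) := by
    rw [Subspace.dual_finrank_eq]
    rw [LinearEquiv.finrank_eq e₁, LinearEquiv.finrank_eq e₂]
    rw [stepD1, stepD23]
  exact ⟨LinearEquiv.ofFinrankEq _ _ hfin⟩
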